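/- Let g, ω ∈ ℝ with 1 < ω², 2√g − 1 < ω², and ω² < g. Then every four-times continuously differentiable function q : ℝ → ℝ satisfying q⁗(t) + (ω² − 1) q''(t) + (g − ω²) q(t) = 0 for all t ∈ ℝ is bounded on ℝ. -/

import Mathlib

lemma harmonic_bounded (r : ℝ) (hr : 0 < r) (u : ℝ → ℝ)
    (hu1 : Differentiable ℝ u) (hu2 : Differentiable ℝ (deriv u))
    (h : ∀ t, deriv (deriv u) t = -(r * u t)) :
    ∃ M, ∀ t, |u t| ≤ M := by
  set E : ℝ → ℝ := fun t => (deriv u t) ^ 2 + r * (u t) ^ 2 with hE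
  have key : ∀ t, HasDerivAt E 0 t := by
    intro t
    have h1 : HasDerivAt u (deriv u t) t := (hu1 t).hasDerivAt
    have h2 : HasDerivAt (deriv u) (-(r * u t)) t := by
      have := (hu2 t).hasDerivAt; rwa [h t] at this
    have h3 := (h2.fun_pow 2).fun_add ((h1.fun_pow 2).const_mul r)
    refine h3.congr_deriv ?_
    ring
  have hconst : ∀ t, E t = E 0 :=
    fun t => is_const_of_deriv_eq_zero (fun x => (key x).differentiableAt)
      (fun x => (key x).deriv) t 0
  refine ⟨Real.sqrt (E 0 / r), fun t => ?_⟩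
  have h1 : r * (u t) ^ 2 ≤ E 0 := by
    have ht : (deriv u t) ^ 2 + r * (u t) ^ 2 = E 0 := hconst t
    nlinarith [sq_nonneg (deriv u t)]
  have h2 : (u t) ^ 2 ≤ E 0 / r := by
    rw [le_div_iff₀ hr]; linarith [h1, mul_comm r ((u t) ^ 2)]
  calc |u t| = Real.sqrt ((u t) ^ 2) := (Real.sqrt_sq_eq_abs _).symm
    _ ≤ Real.sqrt (E 0 / r) := Real.sqrt_le_sqrt h2

/-- In the stability region max{1, 2√g−1} < ω² < g, every C⁴ solution of the
fourth-order equation q⁗ + (ω²−1)q̈ + (g−ω²)q = 0 is bounded on ℝ. -/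
theorem stmt7 (g ω : ℝ) (h1 : 1 < ω ^ 2) (h2 : 2 * Real.sqrt g - 1 < ω ^ 2)
    (h3 : ω ^ 2 < g)
    (q : ℝ → ℝ) (hq : ContDiff ℝ 4 q)
    (heq : ∀ t : ℝ, iteratedDeriv 4 q t + (ω ^ 2 - 1) * iteratedDeriv 2 q t
      + (g - ω ^ 2) * q t = 0) :
    ∃ M : ℝ, ∀ t : ℝ, |q t| ≤ M := by
  have hg0 : (0:ℝ) ≤ g := by nlinarith
  have hD : 0 < (ω ^ 2 + 1) ^ 2 - 4 * g := by
    nlinarith [Real.sq_sqrt hg0, Real.sqrt_nonneg g]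
  set s : ℝ := Real.sqrt ((ω ^ 2 + 1) ^ 2 - 4 * g) with hsdef
  have hs2 : s ^ 2 = (ω ^ 2 + 1) ^ 2 - 4 * g := Real.sq_sqrt hD.le
  have hspos : 0 < s := Real.sqrt_pos.mpr hD
  -- differentiability facts
  have d0 : Differentiable ℝ q := hq.differentiable (by norm_num)
  have d1 : Differentiable ℝ (deriv q) := by
    have := hq.differentiable_iteratedDeriv 1 (by norm_num)
    simpa [iteratedDeriv_one] using this
  have d2 : Differentiable ℝ (iteratedDeriv 2 q) :=
    hq.differentiable_iteratedDeriv 2 (by norm_num)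
  have d3 : Differentiable ℝ (iteratedDeriv 3 q) :=
    hq.differentiable_iteratedDeriv 3 (by norm_num)
  -- main step: for each factorization pair (r₁, r₂), the function q'' + r₂ q is bounded
  have step : ∀ r₁ r₂ : ℝ, 0 < r₁ → r₁ + r₂ = ω ^ 2 - 1 → r₁ * r₂ = g - ω ^ 2 →
      ∃ M, ∀ t, |iteratedDeriv 2 q t + r₂ * q t| ≤ M := by
    intro r₁ r₂ hr₁ hsum hprod
    set u : ℝ → ℝ := fun t => iteratedDeriv 2 q t + r₂ * q t with hudef
    have hu1 : Differentiable ℝ u := d2.add (d0.const_mul r₂)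
    have hderiv : deriv u = fun t => iteratedDeriv 3 q t + r₂ * deriv q t := by
      funext t
      rw [hudef]
      rw [deriv_fun_add (d2 t) ((d0 t).const_mul r₂), deriv_const_mul r₂ (d0 t)]
      congr 1
      have h32 : iteratedDeriv 3 q = deriv (iteratedDeriv 2 q) := by
        rw [show (3:ℕ) = 2 + 1 from rfl]; exact iteratedDeriv_succ
      rw [h32]
    have hu2 : Differentiable ℝ (deriv u) := by
      rw [hderiv]; exact d3.add (d1.const_mul r₂)
    have hderiv2 : ∀ t, deriv (deriv u) t = -(r₁ * u t) := by
      intro t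
      rw [hderiv]
      rw [deriv_fun_add (d3 t) ((d1 t).const_mul r₂), deriv_const_mul r₂ (d1 t)]
      have e3 : iteratedDeriv 4 q = deriv (iteratedDeriv 3 q) := by
        rw [show (4:ℕ) = 3 + 1 from rfl]; exact iteratedDeriv_succ
      have e1 : iteratedDeriv 2 q = deriv (deriv q) := by
        rw [show (2:ℕ) = 1 + 1 from rfl, iteratedDeriv_succ, iteratedDeriv_one]
      rw [← e3, ← e1, hudef]
      show iteratedDeriv 4 q t + r₂ * iteratedDeriv 2 q t
          = -(r₁ * (iteratedDeriv 2 q t + r₂ * q t))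
      linear_combination heq t + iteratedDeriv 2 q t * hsum + q t * hprod
    exact harmonic_bounded r₁ hr₁ u hu1 hu2 hderiv2
  -- the two roots
  set r₁ : ℝ := ((ω ^ 2 - 1) + s) / 2 with hr1def
  set r₂ : ℝ := ((ω ^ 2 - 1) - s) / 2 with hr2def
  have hsum : r₁ + r₂ = ω ^ 2 - 1 := by rw [hr1def, hr2def]; ring
  have hprod : r₁ * r₂ = g - ω ^ 2 := by
    rw [hr1def, hr2def]; nlinarith [hs2]
  have hr1pos : 0 < r₁ := by
    rw [hr1def]; nlinarith [hspos]
  have hr2pos : 0 < r₂ := by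
    rw [hr2def]; nlinarith [hs2, hspos]
  obtain ⟨M₁, hM₁⟩ := step r₁ r₂ hr1pos hsum hprod
  obtain ⟨M₂, hM₂⟩ := step r₂ r₁ hr2pos (by linarith) (by linarith [mul_comm r₁ r₂])
  refine ⟨(M₁ + M₂) / s, fun t => ?_⟩
  have key : q t = ((iteratedDeriv 2 q t + r₁ * q t) - (iteratedDeriv 2 q t + r₂ * q t)) / s := by
    have hr : r₁ - r₂ = s := by rw [hr1def, hr2def]; ring
    field_simp
    linear_combination q t * hr
  rw [key, abs_div, abs_of_pos hspos]
  gcongr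
  calc |(iteratedDeriv 2 q t + r₁ * q t) - (iteratedDeriv 2 q t + r₂ * q t)|
      ≤ |iteratedDeriv 2 q t + r₁ * q t| + |iteratedDeriv 2 q t + r₂ * q t| := abs_sub _ _
    _ ≤ M₁ + M₂ := by
        have := hM₁ t; have := hM₂ t
        -- careful: hM₁ bounds the r₂-combination, hM₂ bounds the r₁-combination
        linarith [hM₁ t, hM₂ t]
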